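/- For every ℓ ∈ L* there exists a constant c ∈ ℝ such that c − 1 ≤ ℓ(p, y) ≤ c + 1 for all p ∈ [0,1] and y ∈ {0,1}. Equivalently, the range of any loss in L* is contained in an interval of length at most 2. -/
import Mathlib


open MeasureTheory Set

noncomputable section

/-- Expected loss of prediction `p` when the outcome is `y ~ Bernoulli(q)`:
`ℓ(p,q) = q·ℓ(p,1) + (1−q)·ℓ(p,0)`. -/
def elos (ℓ : ℝ → ℝ → ℝ) (p q : ℝ) : ℝ := q * ℓ p 1 + (1 - q) * ℓ p 0

/-- A loss is proper if truthful prediction minimizes expected loss. -/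
def IsProper (ℓ : ℝ → ℝ → ℝ) : Prop :=
  ∀ p ∈ Icc (0:ℝ) 1, ∀ q ∈ Icc (0:ℝ) 1, elos ℓ q q ≤ elos ℓ p q

/-- The class `L*` of proper losses with `|ℓ(p,1) − ℓ(p,0)| ≤ 1`. -/
def Lstar (ℓ : ℝ → ℝ → ℝ) : Prop :=
  IsProper ℓ ∧ ∀ p ∈ Icc (0:ℝ) 1, |ℓ p 1 - ℓ p 0| ≤ 1

/-- Projection onto `[0,1]`. -/
def proj01 (x : ℝ) : ℝ := max 0 (min 1 x)

/-- Calibration decision loss of `J` relative to the post-processing class `K`: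
`sup` over `ℓ ∈ L*` and `κ ∈ K` of `E[ℓ(p,y) − ℓ(κ(p),y)]`. -/
def CDL (K : Set (ℝ → ℝ)) (J : Measure (ℝ × ℝ)) : ℝ :=
  sSup { x | ∃ ℓ κ, Lstar ℓ ∧ κ ∈ K ∧
    x = ∫ z, (ℓ z.1 z.2 - ℓ (κ z.1) z.2) ∂J }

/-- `sign_s(t)`: `+1` if `t > 0`, `−1` if `t < 0`, and `s` if `t = 0`. -/
def signS (s t : ℝ) : ℝ := if 0 < t then 1 else if t < 0 then -1 else s

/-- `sign₊ = sign_{+1}`. -/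
def signP (t : ℝ) : ℝ := signS 1 t

/-- The V-shaped loss `ℓ_{v,s}(p,y) = −sign_s(p−v)·(y−v)`. -/
def vloss (v s : ℝ) : ℝ → ℝ → ℝ := fun p y => -(signS s (p - v)) * (y - v)

/-- A valid post-processing class: maps `[0,1]` to `[0,1]`, contains the identity, and
is translation invariant. -/
def ValidClass (K : Set (ℝ → ℝ)) : Prop :=
  (∀ κ ∈ K, ∀ p ∈ Icc (0:ℝ) 1, κ p ∈ Icc (0:ℝ) 1) ∧
  ((fun p : ℝ => p) ∈ K) ∧
  (∀ s t : ℝ, ∀ κ ∈ K, (fun p : ℝ => proj01 (κ (proj01 (p + s)) + t)) ∈ K)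

/-- Upper thresholds of a post-processing class. -/
def thr (K : Set (ℝ → ℝ)) : Set (ℝ → ℝ) :=
  { w | ∃ κ ∈ K, w = fun p => signP (κ p - 1/2) }

/-- Modified thresholds: `thr(K)` together with all lower thresholds of the identity. -/
def thr' (K : Set (ℝ → ℝ)) : Set (ℝ → ℝ) :=
  thr K ∪ { w | ∃ v : ℝ, w = fun p => -signP (p - v) }

/-- Weight-restricted calibration error `CE_W(J) = sup_{w ∈ W} E[w(p)(y − p)]`. -/
def CE (W : Set (ℝ → ℝ)) (J : Measure (ℝ × ℝ)) : ℝ :=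
  sSup { x | ∃ w ∈ W, x = ∫ z, w z.1 * (z.2 - z.1) ∂J }

/-- A probability distribution on `[0,1] × {0,1}`. -/
def IsPredDist (J : Measure (ℝ × ℝ)) : Prop :=
  IsProbabilityMeasure J ∧ ∀ᵐ z ∂J, z.1 ∈ Icc (0:ℝ) 1 ∧ (z.2 = 0 ∨ z.2 = 1)

/-- The class `M₊` of nondecreasing post-processings `[0,1] → [0,1]`. -/
def Mplus : Set (ℝ → ℝ) :=
  { κ | (∀ p ∈ Icc (0:ℝ) 1, κ p ∈ Icc (0:ℝ) 1) ∧ MonotoneOn κ (Icc (0:ℝ) 1) }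

/-- the range of any loss in `L*` lies in an interval of length at most `2`. -/
theorem Lstar_range_bounded (ℓ : ℝ → ℝ → ℝ) (hℓ : Lstar ℓ) :
    ∃ c : ℝ, ∀ p ∈ Icc (0:ℝ) 1, ∀ y ∈ ({0, 1} : Set ℝ),
      c - 1 ≤ ℓ p y ∧ ℓ p y ≤ c + 1 := by
  obtain ⟨hprop, habs⟩ := hℓ
  have h01 : (0:ℝ) ∈ Icc (0:ℝ) 1 := ⟨le_refl 0, zero_le_one⟩
  have h11 : (1:ℝ) ∈ Icc (0:ℝ) 1 := ⟨zero_le_one, le_refl 1⟩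
  refine ⟨(ℓ 0 0 + ℓ 1 1 + 1) / 2, ?_⟩
  intro p hp y hy
  have habp := abs_le.mp (habs p hp)
  have hab0 := abs_le.mp (habs 0 h01)
  have hab1 := abs_le.mp (habs 1 h11)
  have H1 := hprop p hp 0 h01
  have H2 := hprop p hp 1 h11
  have H3 := hprop 0 h01 p hp
  have H4 := hprop 1 h11 p hp
  have H5 := hprop 1 h11 0 h01
  have H6 := hprop 0 h01 1 h11
  simp only [elos] at H1 H2 H3 H4 H5 H6
  obtain ⟨hp0, hp1⟩ := hp
  have hq0 : (0:ℝ) ≤ 1 - p := by linarith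
  have k1 : p * (ℓ 0 1 - ℓ 0 0) ≤ p * 1 := mul_le_mul_of_nonneg_left hab0.2 hp0
  have k2 : (1 - p) * (ℓ p 1 - ℓ p 0) ≤ (1 - p) * 1 := mul_le_mul_of_nonneg_left habp.2 hq0
  have k3 : (1 - p) * (ℓ 1 0 - ℓ 1 1) ≤ (1 - p) * 1 := by
    have : ℓ 1 0 - ℓ 1 1 ≤ 1 := by linarith [hab1.1]
    exact mul_le_mul_of_nonneg_left this hq0
  have k4 : p * (ℓ p 0 - ℓ p 1) ≤ p * 1 := by
    have : ℓ p 0 - ℓ p 1 ≤ 1 := by linarith [habp.1]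
    exact mul_le_mul_of_nonneg_left this hp0
  -- lower bounds from properness at q = 0 and q = 1
  have L0 : ℓ 0 0 ≤ ℓ p 0 := by linarith
  have L1 : ℓ 1 1 ≤ ℓ p 1 := by linarith
  -- |A - B| ≤ 1
  have AB1 : ℓ 0 0 ≤ ℓ 1 1 + 1 := by linarith [hab1.1]
  have AB2 : ℓ 1 1 ≤ ℓ 0 0 + 1 := by linarith [hab0.2]
  -- upper bounds
  have U1 : ℓ p 1 ≤ ℓ 0 0 + 1 := by nlinarith
  have U0 : ℓ p 0 ≤ ℓ 1 1 + 1 := by nlinarith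
  simp only [Set.mem_insert_iff, Set.mem_singleton_iff] at hy
  rcases hy with hy | hy <;> subst hy <;> constructor <;> linarith
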